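/- For the Gauss map τ(x) = 1/x - ⌊1/x⌋ and the Gauss measure γ(A) = (1/log 2) ∫_A dx/(x+1) on the Borel sets of [0,1], γ is τ-invariant: γ(τ^{-1}(A)) = γ(A) for every Borel set A ⊆ [0,1]. -/

import Mathlib

open MeasureTheory

/-- The Gauss (continued fraction) map. -/
noncomputable def gaussMap (x : ℝ) : ℝ := if x = 0 then 0 else 1 / x - ⌊1 / x⌋

/-- The Gauss measure on `[0,1]`, with density `1/((x+1) log 2)` w.r.t. Lebesgue. -/
noncomputable def gaussMeasure : Measure ℝ :=
  (volume.restrict (Set.Icc (0:ℝ) 1)).withDensity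
    (fun x => ENNReal.ofReal (1 / ((x + 1) * Real.log 2)))

namespace GaussAux

noncomputable def F (x : ℝ) : ENNReal := ENNReal.ofReal (1 / ((x + 1) * Real.log 2))

lemma measurable_F : Measurable F := by
  apply Measurable.ennreal_ofReal
  exact (measurable_const.div ((measurable_id.add_const 1).mul measurable_const))

lemma measurable_gaussMap : Measurable gaussMap := by
  unfold gaussMap
  apply Measurable.ite (measurableSet_singleton 0) measurable_const
  exact (measurable_const.div measurable_id).sub
    ((Measurable.of_discrete (f := (Int.cast : ℤ → ℝ))).comp
      (measurable_const.div measurable_id).floor)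

/-- branch interval -/
def J (n : ℕ) : Set ℝ := Set.Ioc (((n:ℝ)+2)⁻¹) (((n:ℝ)+1)⁻¹)

lemma measurableSet_J (n : ℕ) : MeasurableSet (J n) := measurableSet_Ioc

lemma union_J : Set.Ioc (0:ℝ) 1 = ⋃ n : ℕ, J n := by
  ext x
  simp only [Set.mem_Ioc, Set.mem_iUnion, J]
  constructor
  · rintro ⟨hx0, hx1⟩
    have hinv : (1:ℝ) ≤ x⁻¹ := by
      rw [← inv_inv 1]
      exact inv_anti₀ hx0 (by simpa using hx1)
    have h1 : (1:ℤ) ≤ ⌊x⁻¹⌋ := by exact_mod_cast Int.le_floor.2 (by exact_mod_cast hinv)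
    refine ⟨(⌊x⁻¹⌋ - 1).toNat, ?_, ?_⟩
    · have hcast : (((⌊x⁻¹⌋ - 1).toNat : ℕ) : ℝ) = (⌊x⁻¹⌋ : ℝ) - 1 := by
        exact_mod_cast congrArg (Int.cast : ℤ → ℝ) (Int.toNat_of_nonneg (by omega : (0:ℤ) ≤ ⌊x⁻¹⌋ - 1))
      have h2 : x⁻¹ < ((⌊x⁻¹⌋ - 1).toNat : ℝ) + 2 := by
        have := Int.lt_floor_add_one x⁻¹
        rw [hcast]
        linarith
      have := inv_strictAnti₀ (inv_pos.2 hx0) (by simpa using h2)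
      simpa [inv_inv] using this
    · have hcast : (((⌊x⁻¹⌋ - 1).toNat : ℕ) : ℝ) = (⌊x⁻¹⌋ : ℝ) - 1 := by
        exact_mod_cast congrArg (Int.cast : ℤ → ℝ) (Int.toNat_of_nonneg (by omega : (0:ℤ) ≤ ⌊x⁻¹⌋ - 1))
      have h2 : ((⌊x⁻¹⌋ - 1).toNat : ℝ) + 1 ≤ x⁻¹ := by
        have := Int.floor_le x⁻¹
        rw [hcast]
        linarith
      have := inv_anti₀ (by positivity : (0:ℝ) < ((⌊x⁻¹⌋ - 1).toNat : ℝ) + 1) h2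
      simpa [inv_inv] using this
  · rintro ⟨n, hn1, hn2⟩
    have h0 : (0:ℝ) < x := lt_trans (by positivity) hn1
    refine ⟨h0, le_trans hn2 ?_⟩
    rw [← inv_inv 1]
    exact inv_anti₀ (by norm_num) (by push_cast; linarith [Nat.cast_nonneg (α := ℝ) n])

lemma disjoint_J : Pairwise (Function.onFun Disjoint J) := by
  intro m n hmn
  unfold Function.onFun J
  rw [Set.Ioc_disjoint_Ioc]
  rcases lt_or_gt_of_ne hmn with h | h
  · refine le_trans (le_trans (min_le_right _ _) ?_) (le_max_left _ _)
    apply inv_anti₀ (by positivity)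
    have : (m:ℝ) + 1 ≤ n := by exact_mod_cast h
    linarith
  · refine le_trans (le_trans (min_le_left _ _) ?_) (le_max_right _ _)
    apply inv_anti₀ (by positivity)
    have : (n:ℝ) + 1 ≤ m := by exact_mod_cast h
    linarith

lemma branch_eq (A : Set ℝ) (n : ℕ) :
    gaussMap ⁻¹' A ∩ J n = (fun y => (y + ((n:ℝ)+1))⁻¹) '' (A ∩ Set.Ico 0 1) := by
  ext x
  constructor
  · rintro ⟨hA, hx1, hx2⟩
    have hx0 : (0:ℝ) < x := lt_trans (by positivity) hx1
    have h1 : (n:ℝ) + 1 ≤ x⁻¹ := by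
      have := inv_anti₀ hx0 hx2
      simpa [inv_inv] using this
    have h2 : x⁻¹ < (n:ℝ) + 2 := by
      have := inv_strictAnti₀ (by positivity : (0:ℝ) < (((n:ℝ)+2))⁻¹) hx1
      simpa [inv_inv] using this
    have hfl : ⌊x⁻¹⌋ = (n:ℤ) + 1 := by
      rw [Int.floor_eq_iff]
      push_cast
      exact ⟨h1, by linarith⟩
    have hg : gaussMap x = x⁻¹ - ((n:ℝ) + 1) := by
      simp only [gaussMap, if_neg hx0.ne', one_div, hfl]
      push_cast
      ring
    refine ⟨x⁻¹ - ((n:ℝ)+1), ⟨?_, ?_, ?_⟩, ?_⟩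
    · rw [← hg]; exact hA
    · linarith
    · linarith
    · have hx' : x⁻¹ - ((n:ℝ)+1) + ((n:ℝ)+1) = x⁻¹ := by ring
      show (x⁻¹ - ((n:ℝ)+1) + ((n:ℝ)+1))⁻¹ = x
      rw [hx', inv_inv]
  · rintro ⟨y, ⟨hyA, hy0, hy1⟩, rfl⟩
    have hc : (0:ℝ) < y + ((n:ℝ)+1) := by positivity
    have hinv : (y + ((n:ℝ)+1))⁻¹⁻¹ = y + ((n:ℝ)+1) := inv_inv _
    have hfl : ⌊(y + ((n:ℝ)+1))⁻¹⁻¹⌋ = (n:ℤ) + 1 := by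
      rw [hinv, Int.floor_eq_iff]
      push_cast
      constructor <;> linarith
    refine ⟨?_, ?_, ?_⟩
    · have hfl' : ⌊1 / (y + ((n:ℝ)+1))⁻¹⌋ = (n:ℤ) + 1 := by
        rw [one_div, hinv, Int.floor_eq_iff]
        push_cast
        constructor <;> linarith
      have hg : gaussMap (y + ((n:ℝ)+1))⁻¹ = y := by
        rw [gaussMap, if_neg (by positivity : (y + ((n:ℝ)+1))⁻¹ ≠ 0), hfl', one_div, hinv]
        push_cast
        ring
      simpa [Set.mem_preimage, hg] using hyA
    · exact inv_strictAnti₀ hc (by linarith)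
    · exact inv_anti₀ (by positivity) (by linarith)

lemma hasSum_telescope (y : ℝ) (hy : 0 ≤ y) :
    HasSum (fun n : ℕ => 1 / ((y + n + 1) * (y + n + 2))) (1 / (y + 1)) := by
  have hterm : ∀ n : ℕ, 1 / ((y + n + 1) * (y + n + 2))
      = 1 / (y + n + 1) - 1 / (y + n + 2) := by
    intro n
    have h1 : (0:ℝ) < y + n + 1 := by positivity
    have h2 : (0:ℝ) < y + n + 2 := by positivity
    field_simp
    ring
  rw [hasSum_iff_tendsto_nat_of_nonneg (fun n => by positivity)]
  set f : ℕ → ℝ := fun i => 1 / (y + i + 1) with hf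
  have hps : ∀ N : ℕ, ∑ n ∈ Finset.range N, 1 / ((y + n + 1) * (y + n + 2))
      = f 0 - f N := by
    intro N
    rw [← Finset.sum_range_sub' f N]
    apply Finset.sum_congr rfl
    intro n _
    rw [hterm n, hf]
    push_cast
    ring_nf
  simp only [hps]
  have h2 : Filter.Tendsto (fun N : ℕ => y + (N:ℝ) + 1) Filter.atTop Filter.atTop := by
    apply Filter.tendsto_atTop_add_const_right
    exact Filter.tendsto_atTop_add_const_left _ _ tendsto_natCast_atTop_atTop
  have h1 : Filter.Tendsto f Filter.atTop (nhds 0) := by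
    simpa [hf, one_div, Function.comp_def] using tendsto_inv_atTop_zero.comp h2
  have : f 0 = 1 / (y + 1) := by simp [hf]
  simpa [this] using Filter.Tendsto.sub (tendsto_const_nhds (x := f 0)) h1

lemma tsum_density (y : ℝ) (hy : 0 ≤ y) :
    ∑' n : ℕ, ENNReal.ofReal (1 / ((y + n + 1) * (y + n + 2) * Real.log 2)) = F y := by
  have hlog : (0:ℝ) < Real.log 2 := Real.log_pos (by norm_num)
  have hsum : HasSum (fun n : ℕ => 1 / ((y + n + 1) * (y + n + 2) * Real.log 2))
      (1 / ((y + 1) * Real.log 2)) := by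
    have h := (hasSum_telescope y hy).div_const (Real.log 2)
    simpa only [div_div] using h
  rw [F, ← hsum.tsum_eq]
  exact (ENNReal.ofReal_tsum_of_nonneg (fun n => by positivity) hsum.summable).symm

lemma lintegral_image_1d {s : Set ℝ} {f f' : ℝ → ℝ} (hs : MeasurableSet s)
    (hf' : ∀ x ∈ s, HasDerivWithinAt f (f' x) s x) (hf : Set.InjOn f s) (g : ℝ → ENNReal) :
    ∫⁻ x in f '' s, g x = ∫⁻ x in s, ENNReal.ofReal |f' x| * g (f x) := by
  simpa only [ContinuousLinearMap.det_toSpanSingleton] using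
    lintegral_image_eq_lintegral_abs_det_fderiv_mul volume hs
      (fun x hx => (hf' x hx).hasFDerivWithinAt) hf g

end GaussAux

open GaussAux in
theorem gauss_measure_invariant :
    ∀ A : Set ℝ, MeasurableSet A → A ⊆ Set.Icc (0:ℝ) 1 →
      gaussMeasure (gaussMap ⁻¹' A) = gaussMeasure A := by
  intro A hA hA1
  have hP : MeasurableSet (gaussMap ⁻¹' A) := measurable_gaussMap hA
  have hs : MeasurableSet (A ∩ Set.Ico 0 1) := hA.inter measurableSet_Ico
  -- rewrite both sides as set lintegrals against volume
  have hval : ∀ S : Set ℝ, MeasurableSet S →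
      gaussMeasure S = ∫⁻ x in S ∩ Set.Icc 0 1, F x := by
    intro S hS
    rw [gaussMeasure, withDensity_apply _ hS, Measure.restrict_restrict hS]
    rfl
  rw [hval _ hP, hval _ hA]
  -- RHS equals integral over A ∩ Ico 0 1
  have hRHS : ∫⁻ x in A ∩ Set.Icc 0 1, F x = ∫⁻ x in A ∩ Set.Ico 0 1, F x := by
    apply setLIntegral_congr
    rw [Filter.eventuallyEq_set]
    have h1 : volume ({(1:ℝ)} : Set ℝ) = 0 := measure_singleton 1
    filter_upwards [measure_eq_zero_iff_ae_notMem.1 h1] with x hx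
    simp only [Set.mem_inter_iff, Set.mem_Icc, Set.mem_Ico]
    constructor
    · rintro ⟨ha, h0, h1'⟩
      exact ⟨ha, h0, lt_of_le_of_ne h1' (by simpa using hx)⟩
    · rintro ⟨ha, h0, h1'⟩; exact ⟨ha, h0, h1'.le⟩
  rw [hRHS]
  -- LHS: reduce to Ioc, decompose into branches
  have hLHS1 : ∫⁻ x in gaussMap ⁻¹' A ∩ Set.Icc 0 1, F x
      = ∫⁻ x in gaussMap ⁻¹' A ∩ Set.Ioc 0 1, F x := by
    apply setLIntegral_congr
    rw [Filter.eventuallyEq_set]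
    have h0 : volume ({(0:ℝ)} : Set ℝ) = 0 := measure_singleton 0
    filter_upwards [measure_eq_zero_iff_ae_notMem.1 h0] with x hx
    simp only [Set.mem_inter_iff, Set.mem_Icc, Set.mem_Ioc]
    constructor
    · rintro ⟨ha, h0', h1'⟩
      exact ⟨ha, lt_of_le_of_ne h0' (Ne.symm (by simpa using hx)), h1'⟩
    · rintro ⟨ha, h0', h1'⟩; exact ⟨ha, h0'.le, h1'⟩
  rw [hLHS1]
  have hdecomp : gaussMap ⁻¹' A ∩ Set.Ioc 0 1 = ⋃ n : ℕ, (gaussMap ⁻¹' A ∩ J n) := by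
    rw [union_J, Set.inter_iUnion]
  rw [hdecomp, lintegral_iUnion (fun n => hP.inter (measurableSet_J n))
    (fun m n hmn => (disjoint_J hmn).mono Set.inter_subset_right Set.inter_subset_right)]
  -- per-branch change of variables
  have hbranch : ∀ n : ℕ, ∫⁻ x in gaussMap ⁻¹' A ∩ J n, F x
      = ∫⁻ y in A ∩ Set.Ico 0 1,
          ENNReal.ofReal (1 / ((y + n + 1) * (y + n + 2) * Real.log 2)) := by
    intro n
    rw [branch_eq A n]
    rw [lintegral_image_1d hs (f' := fun y => -1 / (y + ((n:ℝ)+1)) ^ 2) ?_ ?_ F]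
    · apply setLIntegral_congr_fun hs
      intro y hy
      have hy0 : (0:ℝ) ≤ y := hy.2.1
      have hc : (0:ℝ) < y + ((n:ℝ)+1) := by positivity
      have hlog : (0:ℝ) < Real.log 2 := Real.log_pos (by norm_num)
      beta_reduce
      rw [F, ← ENNReal.ofReal_mul (by positivity)]
      congr 1
      have hinv1 : (y + ((n:ℝ)+1))⁻¹ + 1 = (y + (n:ℝ) + 2) / (y + ((n:ℝ)+1)) := by
        field_simp
        ring
      rw [hinv1, abs_div, abs_neg, abs_one,
        abs_of_nonneg (by positivity : (0:ℝ) ≤ (y + ((n:ℝ)+1)) ^ 2)]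
      have h2 : (0:ℝ) < y + (n:ℝ) + 2 := by positivity
      field_simp
      ring
    · intro y hy
      have hc : y + ((n:ℝ)+1) ≠ 0 :=
        ne_of_gt (by linarith [hy.2.1, Nat.cast_nonneg (α := ℝ) n])
      have := ((hasDerivAt_id y).add_const ((n:ℝ)+1)).inv hc
      exact this.hasDerivWithinAt
    · intro a ha b hb h
      have := inv_injective h
      linarith [this]
  simp only [hbranch]
  rw [← lintegral_tsum]
  · apply setLIntegral_congr_fun hs
    intro y hy
    exact tsum_density y hy.2.1
  · intro n
    apply Measurable.aemeasurable
    apply Measurable.ennreal_ofReal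
    fun_prop
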